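/- arXiv:2206.06648 — 4 statements merged into one kernel-verified Lean document; each statement's English description precedes it below -/
import Mathlib

section
/- Let α ≥ 0 and h ∈ [0,1]. Then for all t' ≥ t ≥ 0, ((1+t)^{-α} - (1+t')^{-α})^2 (1+t)^{2h} ≤ C (t'-t)^{2h} (1+t)^{-2α} for some constant C depending only on α (one may take C = max(α², 1)). -/
open Real

/-- Mean-value-type bound: `x^(-α) - y^(-α) ≤ α * (y - x) * x^(-α-1)` for `0 < x ≤ y`. -/
lemma aux_mvt (α : ℝ) (hα : 0 ≤ α) {x y : ℝ} (hx : 0 < x) (hxy : x ≤ y) :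
    x ^ (-α) - y ^ (-α) ≤ α * (y - x) * x ^ (-α - 1) := by
  have hy : 0 < y := hx.trans_le hxy
  set u : ℝ := y / x with hu
  have hu1 : 1 ≤ u := (one_le_div hx).mpr hxy
  have hu0 : 0 < u := lt_of_lt_of_le one_pos hu1
  have hlog : Real.log u ≤ u - 1 := Real.log_le_sub_one_of_pos hu0
  have hbern : 1 - α * (u - 1) ≤ u ^ (-α) := by
    have h1 : u ^ (-α) = Real.exp (-α * Real.log u) := by
      rw [Real.rpow_def_of_pos hu0, mul_comm]
    have h2 : 1 + (-α * Real.log u) ≤ Real.exp (-α * Real.log u) :=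
      Real.add_one_le_exp _ |>.trans_eq' (by ring_nf)
    have h3 : -(α * (u - 1)) ≤ -α * Real.log u := by
      rw [neg_mul]
      exact neg_le_neg (mul_le_mul_of_nonneg_left hlog hα)
    rw [h1]
    calc 1 - α * (u - 1) = 1 + -(α * (u - 1)) := by ring
      _ ≤ 1 + (-α * Real.log u) := by linarith
      _ ≤ _ := h2
  have hyx : y ^ (-α) = x ^ (-α) * u ^ (-α) := by
    rw [hu, Real.div_rpow hy.le hx.le, eq_comm]
    field_simp
  have hxpos : (0:ℝ) < x ^ (-α) := Real.rpow_pos_of_pos hx _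
  calc x ^ (-α) - y ^ (-α) = x ^ (-α) * (1 - u ^ (-α)) := by rw [hyx]; ring
    _ ≤ x ^ (-α) * (α * (u - 1)) := by
        apply mul_le_mul_of_nonneg_left _ hxpos.le
        linarith
    _ = α * (y - x) * (x ^ (-α) * x⁻¹) := by
        rw [hu]; field_simp
    _ = α * (y - x) * x ^ (-α - 1) := by
        rw [Real.rpow_sub hx, Real.rpow_one, div_eq_mul_inv]

theorem stmt1 (α : ℝ) (hα : 0 ≤ α) :
    ∃ C : ℝ, ∀ h ∈ Set.Icc (0:ℝ) 1, ∀ t t' : ℝ, 0 ≤ t → t ≤ t' →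
      ((1 + t) ^ (-α) - (1 + t') ^ (-α)) ^ 2 * (1 + t) ^ (2 * h) ≤
        C * (t' - t) ^ (2 * h) * (1 + t) ^ (-(2 * α)) := by
  refine ⟨α ^ 2 + 1, ?_⟩
  rintro h ⟨h0, h1⟩ t t' ht htt'
  set x : ℝ := 1 + t with hxdef
  set y : ℝ := 1 + t' with hydef
  have hx : (0:ℝ) < x := by positivity
  have hxy : x ≤ y := by simp [hxdef, hydef]; linarith
  have hy : (0:ℝ) < y := hx.trans_le hxy
  set δ : ℝ := t' - t with hδdef
  have hδ : 0 ≤ δ := sub_nonneg.mpr htt'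
  have hA0 : 0 ≤ x ^ (-α) - y ^ (-α) := by
    have : y ^ (-α) ≤ x ^ (-α) :=
      Real.rpow_le_rpow_of_nonpos hx hxy (neg_nonpos.mpr hα)
    linarith
  have hxm : x ^ (-(2 * α)) = x ^ (-α) * x ^ (-α) := by
    rw [← Real.rpow_add hx]; ring_nf
  rcases eq_or_lt_of_le hδ with hδ0 | hδpos
  · -- δ = 0, so t' = t
    have ht' : t' = t := by simp only [hδdef] at hδ0; linarith
    have hy_eq : y = x := by rw [hxdef, hydef, ht']
    rw [hy_eq, sub_self, show ((0:ℝ))^2 = 0 by norm_num, zero_mul]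
    have h1 : (0:ℝ) ≤ (t' - t) ^ (2*h) := Real.rpow_nonneg (by linarith) _
    have h2 : (0:ℝ) ≤ x ^ (-(2*α)) := Real.rpow_nonneg hx.le _
    have h3 : (0:ℝ) ≤ α^2 + 1 := by positivity
    positivity
  · rcases le_or_gt δ x with hcase | hcase
    · -- case δ ≤ x : use MVT bound
      have hmvt := aux_mvt α hα hx hxy
      have hyx : y - x = δ := by simp [hxdef, hydef, hδdef]
      rw [hyx] at hmvt
      have hsq : (x ^ (-α) - y ^ (-α)) ^ 2 ≤ (α * δ * x ^ (-α - 1)) ^ 2 := by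
        apply sq_le_sq' _ hmvt
        have : 0 ≤ α * δ * x ^ (-α - 1) := by positivity
        linarith
      have key : (α * δ * x ^ (-α - 1)) ^ 2 * x ^ (2 * h) ≤
          (α ^ 2 + 1) * δ ^ (2 * h) * x ^ (-(2 * α)) := by
        have hE : (0:ℝ) < x ^ ((-α-1)*2 + 2*h) := Real.rpow_pos_of_pos hx _
        have hδh : (0:ℝ) ≤ δ ^ (2*h) := Real.rpow_nonneg hδ _
        calc (α * δ * x ^ (-α - 1)) ^ 2 * x ^ (2 * h)
            = α^2 * δ^2 * ((x ^ (-α-1))^2 * x^(2*h)) := by ring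
          _ = α^2 * δ^2 * (x^((-α-1)*2) * x^(2*h)) := by
              rw [← Real.rpow_natCast (x ^ (-α-1)) 2, ← Real.rpow_mul hx.le]; norm_num
          _ = α^2 * δ^2 * x^((-α-1)*2 + 2*h) := by rw [Real.rpow_add hx]
          _ = α^2 * (δ^(2*h) * δ^(2-2*h)) * x^((-α-1)*2 + 2*h) := by
              rw [← Real.rpow_add hδpos, ← Real.rpow_natCast δ 2]; norm_num
          _ ≤ α^2 * (δ^(2*h) * x^(2-2*h)) * x^((-α-1)*2 + 2*h) := by
              have hb : δ^(2-2*h) ≤ x^(2-2*h) :=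
                Real.rpow_le_rpow hδ hcase (by linarith)
              gcongr
          _ = α^2 * δ^(2*h) * x^(-(2*α)) := by
              rw [mul_assoc (α^2), mul_assoc (δ^(2*h)), ← Real.rpow_add hx,
                show (2 - 2*h + ((-α-1)*2 + 2*h)) = -(2*α) by ring, mul_assoc]
          _ ≤ (α ^ 2 + 1) * δ ^ (2 * h) * x ^ (-(2 * α)) := by
              have := Real.rpow_nonneg hx.le (-(2*α))
              nlinarith [mul_nonneg hδh this]
      calc (x ^ (-α) - y ^ (-α)) ^ 2 * x ^ (2 * h)
          ≤ (α * δ * x ^ (-α - 1)) ^ 2 * x ^ (2 * h) := by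
            apply mul_le_mul_of_nonneg_right hsq (by positivity)
        _ ≤ _ := key
    · -- case x < δ
      have hb1 : (x ^ (-α) - y ^ (-α)) ^ 2 ≤ x ^ (-(2 * α)) := by
        have h1 : x ^ (-α) - y ^ (-α) ≤ x ^ (-α) := by
          have : 0 < y ^ (-α) := Real.rpow_pos_of_pos hy _
          linarith
        have := Real.rpow_pos_of_pos hx (-α)
        nlinarith [Real.rpow_pos_of_pos hy (-α)]
      have hb2 : x ^ (2 * h) ≤ δ ^ (2 * h) :=
        Real.rpow_le_rpow hx.le hcase.le (by linarith)
      calc (x ^ (-α) - y ^ (-α)) ^ 2 * x ^ (2 * h)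
          ≤ x ^ (-(2 * α)) * δ ^ (2 * h) := by
            apply mul_le_mul hb1 hb2 (by positivity) (by positivity)
        _ ≤ (α ^ 2 + 1) * δ ^ (2 * h) * x ^ (-(2 * α)) := by
            nlinarith [Real.rpow_nonneg hx.le (-(2*α)), Real.rpow_nonneg hδ (2*h), sq_nonneg α,
              mul_nonneg (Real.rpow_nonneg hx.le (-(2*α))) (Real.rpow_nonneg hδ (2*h))]
end

section
/- For every compact subset 𝓗 of (0,1), the function h ↦ ∫₀^∞ ((1+s)^{h-1/2} - s^{h-1/2})² ds is finite for each h ∈ (0,1) and continuous on 𝓗; in particular sup over h ∈ 𝓗 of this integral is finite. -/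
open Real Set MeasureTheory

lemma key_ineq {c u : ℝ} (hc : |c| ≤ 1/2) (hu : 0 ≤ u) : |(1+u)^c - 1| ≤ u := by
  have h1u : (1:ℝ) ≤ 1 + u := by linarith
  have hpos : (0:ℝ) < 1 + u := by linarith
  obtain ⟨hc1, hc2⟩ := abs_le.1 hc
  have hs : ∀ d : ℝ, 0 ≤ d → d ≤ 1/2 → (1+u)^d - 1 ≤ u/2 := by
    intro d hd0 hd
    have h2 : (1+u)^d ≤ (1+u)^((1:ℝ)/2) := Real.rpow_le_rpow_of_exponent_le h1u hd
    have heq : (1+u)^((1:ℝ)/2) = Real.sqrt (1+u) := (Real.sqrt_eq_rpow _).symm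
    have hsq : Real.sqrt (1+u) ≤ 1 + u/2 := by
      nlinarith [Real.sq_sqrt hpos.le, Real.sqrt_nonneg (1+u)]
    rw [heq] at h2; linarith
  rcases le_or_gt 0 c with h | h
  · have h1 : 1 ≤ (1+u)^c := Real.one_le_rpow h1u h
    rw [abs_of_nonneg (by linarith)]
    have := hs c h (by linarith)
    linarith
  · rw [abs_of_nonpos (by nlinarith [Real.rpow_le_one_of_one_le_of_nonpos h1u h.le])]
    set t := (1+u)^(-c) with ht
    have ht1 : (1:ℝ) ≤ t := Real.one_le_rpow h1u (by linarith)
    have htc : (1+u)^c = t⁻¹ := by rw [ht, ← Real.rpow_neg hpos.le, neg_neg]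
    have h2 : t - 1 ≤ u/2 := hs (-c) (by linarith) (by linarith)
    have h3 : 1 - t⁻¹ = (t-1)/t := by field_simp
    have h4 : (t-1)/t ≤ t - 1 := div_le_self (by linarith) ht1
    rw [htc]; linarith

lemma pt_bound {a b h s : ℝ} (ha : 0 < a) (hb : b < 1) (hh : h ∈ Icc a b) (hs : 0 < s) :
    ((1 + s) ^ (h - 1/2) - s ^ (h - 1/2)) ^ 2 ≤
      if s ≤ 1 then 8 + 2 * s ^ (2*a - 1) else s ^ (2*b - 3) := by
  obtain ⟨hha, hhb⟩ := hh
  have hh1 : 0 < h := lt_of_lt_of_le ha hha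
  have hh2 : h < 1 := lt_of_le_of_lt hhb hb
  have hc : |h - 1/2| ≤ 1/2 := abs_le.2 ⟨by linarith, by linarith⟩
  split_ifs with h1
  · -- s ≤ 1
    set x := (1+s)^(h - 1/2) with hx
    set y := s^(h - 1/2) with hy
    have hx0 : 0 ≤ x := Real.rpow_nonneg (by linarith) _
    have hy0 : 0 ≤ y := Real.rpow_nonneg hs.le _
    have hxle : x ≤ 2 := by
      rcases le_or_gt 0 (h - 1/2) with hcs | hcs
      · calc x ≤ 2 ^ (h - 1/2) := Real.rpow_le_rpow (by linarith) (by linarith) hcs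
          _ ≤ 2 ^ (1:ℝ) := Real.rpow_le_rpow_of_exponent_le one_le_two (by linarith)
          _ = 2 := Real.rpow_one 2
      · have : x ≤ 1 := Real.rpow_le_one_of_one_le_of_nonpos (by linarith) hcs.le
        linarith
    have hy2 : y^2 ≤ s ^ (2*a - 1) := by
      have e1 : y^2 = s ^ ((h - 1/2) * 2) := by
        rw [hy, Real.rpow_mul hs.le, Real.rpow_two]
      rw [e1]
      exact Real.rpow_le_rpow_of_exponent_ge hs h1 (by linarith)
    nlinarith [sq_nonneg (x + y)]
  · -- 1 < s
    push_neg at h1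
    have hfac : (1+s)^(h-1/2) - s^(h-1/2) = s^(h-1/2) * ((1 + 1/s)^(h-1/2) - 1) := by
      rw [mul_sub, mul_one, ← Real.mul_rpow hs.le (by positivity)]
      have : s * (1 + 1/s) = 1 + s := by field_simp; ring
      rw [this]
    have hk : |(1 + 1/s)^(h-1/2) - 1| ≤ 1/s := key_ineq hc (by positivity)
    have hsq : ((1 + 1/s)^(h-1/2) - 1)^2 ≤ (1/s)^2 := by
      rw [← sq_abs]
      exact pow_le_pow_left₀ (abs_nonneg _) hk 2
    have e1 : (s^(h-1/2))^2 = s ^ ((h-1/2)*2) := by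
      rw [Real.rpow_mul hs.le, Real.rpow_two]
    calc ((1+s)^(h-1/2) - s^(h-1/2))^2
        = (s^(h-1/2))^2 * ((1 + 1/s)^(h-1/2) - 1)^2 := by rw [hfac, mul_pow]
      _ ≤ (s^(h-1/2))^2 * (1/s)^2 := by
          apply mul_le_mul_of_nonneg_left hsq (sq_nonneg _)
      _ = s ^ ((h-1/2)*2) * s ^ (-2:ℝ) := by
          rw [e1]; congr 1
          rw [Real.rpow_neg hs.le, ← Real.rpow_two, Real.rpow_two]
          field_simp
          norm_cast
      _ = s ^ ((h-1/2)*2 + (-2:ℝ)) := (Real.rpow_add hs _ _).symm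
      _ ≤ s ^ (2*b - 3) := Real.rpow_le_rpow_of_exponent_le h1.le (by linarith)

lemma bound_integrable {a b : ℝ} (ha : 0 < a) (hb : b < 1) :
    IntegrableOn (fun s : ℝ => if s ≤ 1 then 8 + 2 * s ^ (2*a - 1) else s ^ (2*b - 3))
      (Ioi 0) := by
  have h1 : IntegrableOn (fun s : ℝ => 8 + 2 * s ^ (2*a-1)) (Ioc 0 1) := by
    apply Integrable.add
    · exact integrableOn_const measure_Ioc_lt_top.ne
    · have := intervalIntegral.intervalIntegrable_rpow' (show (-1:ℝ) < 2*a-1 by linarith)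
        (a := 0) (b := 1)
      rw [intervalIntegrable_iff, Set.uIoc_of_le zero_le_one] at this
      exact this.const_mul 2
  have h2 : IntegrableOn (fun s : ℝ => s ^ (2*b - 3)) (Ioi 1) :=
    integrableOn_Ioi_rpow_of_lt (by linarith) one_pos
  rw [← Set.Ioc_union_Ioi_eq_Ioi (zero_le_one (α := ℝ))]
  apply IntegrableOn.union
  · exact h1.congr_fun (fun s hs => by simp [if_pos hs.2]) measurableSet_Ioc
  · exact h2.congr_fun (fun s hs => by
      simp [if_neg (not_le.2 (mem_Ioi.1 hs))]) measurableSet_Ioi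

lemma meas_F (h : ℝ) :
    AEStronglyMeasurable (fun s : ℝ => ((1 + s) ^ (h - 1/2) - s ^ (h - 1/2)) ^ 2)
      (volume.restrict (Ioi 0)) := by
  apply ContinuousOn.aestronglyMeasurable _ measurableSet_Ioi
  have c1 : ContinuousOn (fun s : ℝ => (1 + s) ^ (h - 1/2)) (Ioi 0) :=
    (continuousOn_const.add continuousOn_id).rpow_const
      (fun x hx => Or.inl (by have := mem_Ioi.1 hx; simp only [Pi.add_apply, id]; intro hc; linarith))
  have c2 : ContinuousOn (fun s : ℝ => s ^ (h - 1/2)) (Ioi 0) :=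
    continuousOn_id.rpow_const (fun x hx => Or.inl (ne_of_gt (mem_Ioi.1 hx)))
  exact (c1.sub c2).pow 2

lemma cont_base {x : ℝ} (hx : 0 < x) : Continuous fun h : ℝ => x ^ h := by
  have : (fun h : ℝ => x ^ h) = fun h => Real.exp (Real.log x * h) :=
    funext fun h => Real.rpow_def_of_pos hx h
  rw [this]
  exact Real.continuous_exp.comp (continuous_const.mul continuous_id)

lemma cont_F {s : ℝ} (hs : 0 < s) :
    Continuous fun h : ℝ => ((1 + s) ^ (h - 1/2) - s ^ (h - 1/2)) ^ 2 := by
  have c1 : Continuous fun h : ℝ => (1+s) ^ (h - 1/2) :=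
    (cont_base (by linarith)).comp (continuous_id.sub continuous_const)
  have c2 : Continuous fun h : ℝ => s ^ (h - 1/2) :=
    (cont_base hs).comp (continuous_id.sub continuous_const)
  exact (c1.sub c2).pow 2

theorem stmt2 (𝓗 : Set ℝ) (hcpt : IsCompact 𝓗) (hsub : 𝓗 ⊆ Set.Ioo 0 1) :
    (∀ h ∈ Set.Ioo (0:ℝ) 1, MeasureTheory.IntegrableOn
        (fun s : ℝ => ((1 + s) ^ (h - 1/2) - s ^ (h - 1/2)) ^ 2) (Set.Ioi 0)) ∧
    ContinuousOn
      (fun h : ℝ => ∫ s in Set.Ioi (0:ℝ), ((1 + s) ^ (h - 1/2) - s ^ (h - 1/2)) ^ 2) 𝓗 ∧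
    ∃ M : ℝ, ∀ h ∈ 𝓗,
      (∫ s in Set.Ioi (0:ℝ), ((1 + s) ^ (h - 1/2) - s ^ (h - 1/2)) ^ 2) ≤ M := by
  have hint : ∀ h ∈ Set.Ioo (0:ℝ) 1, MeasureTheory.IntegrableOn
      (fun s : ℝ => ((1 + s) ^ (h - 1/2) - s ^ (h - 1/2)) ^ 2) (Set.Ioi 0) := by
    intro h hh
    apply (bound_integrable (a := h) (b := h) hh.1 hh.2).mono' (meas_F h)
    filter_upwards [ae_restrict_mem measurableSet_Ioi] with s hs
    rw [Real.norm_eq_abs, abs_of_nonneg (sq_nonneg _)]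
    exact pt_bound hh.1 hh.2 ⟨le_rfl, le_rfl⟩ (mem_Ioi.1 hs)
  refine ⟨hint, ?_⟩
  rcases 𝓗.eq_empty_or_nonempty with hE | hNE
  · subst hE
    exact ⟨continuousOn_empty _, 0, fun h hh => absurd hh (Set.notMem_empty h)⟩
  · set a := sInf 𝓗 with ha'
    set b := sSup 𝓗 with hb'
    have haH : a ∈ 𝓗 := hcpt.sInf_mem hNE
    have hbH : b ∈ 𝓗 := hcpt.sSup_mem hNE
    have ha : 0 < a := (hsub haH).1
    have hb : b < 1 := (hsub hbH).2
    have hsubI : 𝓗 ⊆ Set.Icc a b := fun x hx =>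
      ⟨csInf_le hcpt.bddBelow hx, le_csSup hcpt.bddAbove hx⟩
    have hcont : ContinuousOn
        (fun h : ℝ => ∫ s in Set.Ioi (0:ℝ), ((1 + s) ^ (h - 1/2) - s ^ (h - 1/2)) ^ 2)
        (Set.Icc a b) := by
      refine MeasureTheory.continuousOn_of_dominated (fun h _ => meas_F h)
        (fun h hh => ?_) (bound_integrable ha hb) ?_
      · filter_upwards [ae_restrict_mem measurableSet_Ioi] with s hs
        rw [Real.norm_eq_abs, abs_of_nonneg (sq_nonneg _)]
        exact pt_bound ha hb hh (mem_Ioi.1 hs)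
      · filter_upwards [ae_restrict_mem measurableSet_Ioi] with s hs
        exact (cont_F (mem_Ioi.1 hs)).continuousOn
    refine ⟨hcont.mono hsubI, ?_⟩
    obtain ⟨C, hC⟩ := hcpt.exists_bound_of_continuousOn (hcont.mono hsubI)
    exact ⟨C, fun h hh => le_trans (le_abs_self _) (by simpa using hC h hh)⟩
end

section
/- Let 𝓗 ⊂ (0,1) be compact and ρ := 4 max(𝓗) - 4. There exists a constant C such that for all t ≥ 0: ∫₀^{t+1}∫₀^{t+1} (1 ∧ |s₁ - s₂|^ρ) ds₁ ds₂ ≤ C (log(t+1) + 1)(t+1)^{(4max(𝓗)-2) ∨ 1}, and ∫_{[0,t+1]³} (1 ∧ |s₁-s₂|^ρ)(1 ∧ |s₂-s₃|^ρ) ds ≤ C (log(t+1)+1)² (t+1)^{(8max(𝓗)-5) ∨ 1}. -/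
open MeasureTheory Set Real

private lemma bdd_intOn {f : ℝ → ℝ} {M : ℝ} (hm : Measurable f) (hb : ∀ x, ‖f x‖ ≤ M)
    (s : Set ℝ) (hs : volume s ≠ ⊤) : IntegrableOn f s :=
  Measure.integrableOn_of_bounded hs hm.aestronglyMeasurable (Filter.Eventually.of_forall hb)

private lemma gmeas : Measurable (fun u : ℝ => min 1 |u|⁻¹) := by fun_prop

private lemma g_nonneg (u : ℝ) : 0 ≤ min 1 |u|⁻¹ := le_min one_pos.le (by positivity)

private lemma g_norm_le (u : ℝ) : ‖min 1 |u|⁻¹‖ ≤ 1 := by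
  rw [Real.norm_eq_abs, abs_of_nonneg (g_nonneg u)]; exact min_le_left _ _

private lemma g_intInt (a b : ℝ) :
    IntervalIntegrable (fun u : ℝ => min 1 |u|⁻¹) volume a b := by
  apply IntegrableOn.intervalIntegrable
  apply bdd_intOn gmeas g_norm_le
  rw [Set.uIcc]
  exact measure_Icc_lt_top.ne

private lemma g_int_bound (T s : ℝ) (hT : 1 ≤ T) (hs0 : 0 ≤ s) (hsT : s ≤ T) :
    ∫ y in Icc 0 T, min 1 |s - y|⁻¹ ≤ 2 * (Real.log T + 1) := by
  have h0T : (0:ℝ) ≤ T := zero_le_one.trans hT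
  rw [MeasureTheory.integral_Icc_eq_integral_Ioc, ← intervalIntegral.integral_of_le h0T,
    intervalIntegral.integral_comp_sub_left (fun u => min 1 |u|⁻¹) s]
  have h1 : (∫ u in (s - T)..(s - 0), min 1 |u|⁻¹) ≤ ∫ u in (-T)..T, min 1 |u|⁻¹ := by
    apply intervalIntegral.integral_mono_interval (by linarith) (by linarith) (by linarith)
    · exact Filter.Eventually.of_forall fun u => g_nonneg u
    · exact g_intInt _ _
  refine h1.trans ?_
  have hsplit : (∫ u in (-T)..(-1:ℝ), min 1 |u|⁻¹) + (∫ u in (-1:ℝ)..1, min 1 |u|⁻¹)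
      + (∫ u in (1:ℝ)..T, min 1 |u|⁻¹) = ∫ u in (-T)..T, min 1 |u|⁻¹ := by
    rw [intervalIntegral.integral_add_adjacent_intervals (g_intInt _ _) (g_intInt _ _),
      intervalIntegral.integral_add_adjacent_intervals (g_intInt _ _) (g_intInt _ _)]
  rw [← hsplit]
  have hp1 : (∫ u in (-T)..(-1:ℝ), min 1 |u|⁻¹) = Real.log T := by
    have heq : Set.EqOn (fun u : ℝ => min 1 |u|⁻¹) (fun u : ℝ => -u⁻¹) (Set.uIcc (-T) (-1)) := by
      intro u hu
      rw [Set.uIcc_of_le (by linarith)] at hu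
      have hu1 : u ≤ -1 := hu.2
      have habs : |u| = -u := abs_of_neg (by linarith)
      simp only [habs, inv_neg]
      exact min_eq_right (by
        rw [neg_le]
        have : (-u)⁻¹ ≤ 1 := inv_le_one_of_one_le₀ (by linarith)
        rw [inv_neg] at this
        linarith)
    rw [intervalIntegral.integral_congr heq, intervalIntegral.integral_neg,
      integral_inv (by rw [Set.uIcc_of_le (by linarith)]; intro h; exact absurd h.2 (by norm_num))]
    rw [show (-1:ℝ)/(-T) = T⁻¹ by field_simp, Real.log_inv, neg_neg]
  have hp3 : (∫ u in (1:ℝ)..T, min 1 |u|⁻¹) = Real.log T := by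
    have heq : Set.EqOn (fun u : ℝ => min 1 |u|⁻¹) (fun u : ℝ => u⁻¹) (Set.uIcc 1 T) := by
      intro u hu
      rw [Set.uIcc_of_le hT] at hu
      have habs : |u| = u := abs_of_pos (by linarith [hu.1])
      simp only [habs]
      exact min_eq_right (inv_le_one_of_one_le₀ hu.1)
    rw [intervalIntegral.integral_congr heq,
      integral_inv (by rw [Set.uIcc_of_le hT]; intro h; exact absurd h.1 (by norm_num))]
    rw [div_one]
  have hp2 : (∫ u in (-1:ℝ)..1, min 1 |u|⁻¹) ≤ 2 := by
    have : (∫ u in (-1:ℝ)..1, min 1 |u|⁻¹) ≤ ∫ _u in (-1:ℝ)..1, (1:ℝ) := by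
      apply intervalIntegral.integral_mono_on (by norm_num) (g_intInt _ _)
        intervalIntegrable_const
      intro u _
      exact min_le_left _ _
    norm_num at this
    linarith
  rw [hp1, hp3]
  linarith

private lemma f_nonneg (ρ x : ℝ) : 0 ≤ min 1 (|x| ^ ρ) :=
  le_min one_pos.le (Real.rpow_nonneg (abs_nonneg _) _)

private lemma f_norm_le (ρ x : ℝ) : ‖min 1 (|x| ^ ρ)‖ ≤ 1 := by
  rw [Real.norm_eq_abs, abs_of_nonneg (f_nonneg ρ x)]; exact min_le_left _ _

private lemma f_intOn (ρ a T : ℝ) :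
    IntegrableOn (fun y : ℝ => min 1 (|a - y| ^ ρ)) (Icc (0:ℝ) T) :=
  bdd_intOn (by fun_prop) (fun x => f_norm_le ρ (a - x)) _ measure_Icc_lt_top.ne

private lemma pointwise_bound (ρ T x : ℝ) (hρ : ρ < 0) (hT : 1 ≤ T) (hx : |x| ≤ T) :
    min 1 (|x| ^ ρ) ≤ T ^ max (ρ + 1) 0 * min 1 |x|⁻¹ := by
  have hT0 : (0:ℝ) < T := lt_of_lt_of_le one_pos hT
  have hTm : (1:ℝ) ≤ T ^ max (ρ + 1) 0 := Real.one_le_rpow hT (le_max_right _ _)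
  rcases eq_or_ne x 0 with rfl | hx0
  · simp [Real.zero_rpow hρ.ne]
  · have habs : 0 < |x| := abs_pos.mpr hx0
    rcases le_or_gt |x| 1 with h1 | h1
    · have hinv : (1:ℝ) ≤ |x|⁻¹ := (one_le_inv₀ habs).mpr h1
      rw [min_eq_left hinv]
      calc min 1 (|x| ^ ρ) ≤ 1 := min_le_left _ _
        _ ≤ T ^ max (ρ + 1) 0 * 1 := by rw [mul_one]; exact hTm
    · have hinv : |x|⁻¹ ≤ 1 := inv_le_one_of_one_le₀ h1.le
      rw [min_eq_right hinv]
      refine (min_le_right _ _).trans ?_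
      have hsplit : |x| ^ ρ = |x| ^ (ρ + 1) * |x|⁻¹ := by
        rw [← Real.rpow_neg_one |x|, ← Real.rpow_add habs]
        norm_num
      rw [hsplit]
      apply mul_le_mul_of_nonneg_right _ (by positivity)
      rcases le_or_gt (ρ + 1) 0 with h2 | h2
      · calc |x| ^ (ρ + 1) ≤ 1 := Real.rpow_le_one_of_one_le_of_nonpos h1.le h2
          _ ≤ T ^ max (ρ + 1) 0 := hTm
      · rw [max_eq_left h2.le]
        exact Real.rpow_le_rpow (abs_nonneg _) hx h2.le

private lemma key (ρ T s : ℝ) (hρ : ρ < 0) (hT : 1 ≤ T) (hs0 : 0 ≤ s) (hsT : s ≤ T) :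
    ∫ y in Icc (0:ℝ) T, min 1 (|s - y| ^ ρ)
      ≤ 2 * (Real.log T + 1) * T ^ max (ρ + 1) 0 := by
  have step : (∫ y in Icc (0:ℝ) T, min 1 (|s - y| ^ ρ))
      ≤ ∫ y in Icc (0:ℝ) T, T ^ max (ρ + 1) 0 * min 1 |s - y|⁻¹ := by
    have hint : IntegrableOn (fun y : ℝ => T ^ max (ρ + 1) 0 * min 1 |s - y|⁻¹)
        (Icc (0:ℝ) T) := by
      apply bdd_intOn (M := T ^ max (ρ + 1) 0) (by fun_prop) _ _ measure_Icc_lt_top.ne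
      intro y
      rw [norm_mul]
      calc ‖T ^ max (ρ + 1) 0‖ * ‖min 1 |s - y|⁻¹‖
          ≤ ‖T ^ max (ρ + 1) 0‖ * 1 := by gcongr; exact g_norm_le _
        _ = T ^ max (ρ + 1) 0 := by
            rw [mul_one, Real.norm_eq_abs, abs_of_nonneg (Real.rpow_nonneg (by linarith) _)]
    apply setIntegral_mono_on (f_intOn ρ s T) hint measurableSet_Icc
    intro y hy
    apply pointwise_bound ρ T (s - y) hρ hT
    rw [abs_sub_le_iff]
    constructor <;> linarith [hy.1, hy.2]
  refine step.trans ?_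
  rw [MeasureTheory.integral_const_mul]
  calc T ^ max (ρ + 1) 0 * ∫ y in Icc (0:ℝ) T, min 1 |s - y|⁻¹
      ≤ T ^ max (ρ + 1) 0 * (2 * (Real.log T + 1)) := by
        apply mul_le_mul_of_nonneg_left (g_int_bound T s hT hs0 hsT)
          (Real.rpow_nonneg (by linarith) _)
    _ = 2 * (Real.log T + 1) * T ^ max (ρ + 1) 0 := by ring

theorem stmt17 (𝓗 : Set ℝ) (hcpt : IsCompact 𝓗) (hne : 𝓗.Nonempty)
    (hsub : 𝓗 ⊆ Set.Ioo 0 1) :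
    ∃ C : ℝ, ∀ t : ℝ, 0 ≤ t →
      (∫ s₁ in Set.Icc (0:ℝ) (t+1), ∫ s₂ in Set.Icc (0:ℝ) (t+1),
          min 1 (|s₁ - s₂| ^ (4 * sSup 𝓗 - 4))) ≤
        C * (Real.log (t+1) + 1) * (t+1) ^ (max (4 * sSup 𝓗 - 2) 1) ∧
      (∫ s₁ in Set.Icc (0:ℝ) (t+1), ∫ s₂ in Set.Icc (0:ℝ) (t+1),
          ∫ s₃ in Set.Icc (0:ℝ) (t+1),
          min 1 (|s₁ - s₂| ^ (4 * sSup 𝓗 - 4)) * min 1 (|s₂ - s₃| ^ (4 * sSup 𝓗 - 4))) ≤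
        C * (Real.log (t+1) + 1) ^ 2 * (t+1) ^ (max (8 * sSup 𝓗 - 5) 1) := by
  have hH : sSup 𝓗 ∈ Set.Ioo 0 1 := hsub (hcpt.sSup_mem hne)
  refine ⟨4, fun t ht => ?_⟩
  set H := sSup 𝓗 with hHdef
  set ρ := 4 * H - 4 with hρdef
  have hρ : ρ < 0 := by rw [hρdef]; linarith [hH.2]
  set T := t + 1 with hTdef
  have hT : 1 ≤ T := by rw [hTdef]; linarith
  have hT0 : (0:ℝ) < T := lt_of_lt_of_le one_pos hT
  have hlog : 0 ≤ Real.log T := Real.log_nonneg hT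
  set m := max (ρ + 1) 0 with hmdef
  have hm0 : 0 ≤ m := le_max_right _ _
  set B := 2 * (Real.log T + 1) * T ^ m with hBdef
  have hB0 : 0 ≤ B := by
    apply mul_nonneg (by linarith) (Real.rpow_nonneg hT0.le _)
  have hkey : ∀ s ∈ Icc (0:ℝ) T, (∫ y in Icc (0:ℝ) T, min 1 (|s - y| ^ ρ)) ≤ B :=
    fun s hs => key ρ T s hρ hT hs.1 hs.2
  have hFnn : ∀ s : ℝ, 0 ≤ ∫ y in Icc (0:ℝ) T, min 1 (|s - y| ^ ρ) := fun s =>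
    setIntegral_nonneg measurableSet_Icc fun y _ => f_nonneg ρ _
  have hvolT : (volume (Icc (0:ℝ) T)).toReal = T := by
    rw [Real.volume_Icc, sub_zero, ENNReal.toReal_ofReal hT0.le]
  have houter : ∀ (F : ℝ → ℝ) (c : ℝ), (∀ s ∈ Icc (0:ℝ) T, 0 ≤ F s) →
      (∀ s ∈ Icc (0:ℝ) T, F s ≤ c) → (∫ s in Icc (0:ℝ) T, F s) ≤ c * T := by
    intro F c h0 h1
    have hnorm := norm_setIntegral_le_of_norm_le_const_ae' (μ := volume) (s := Icc (0:ℝ) T)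
      measure_Icc_lt_top (C := c)
      (Filter.Eventually.of_forall fun s hs => by
        rw [Real.norm_eq_abs, abs_of_nonneg (h0 s hs)]; exact h1 s hs)
    rw [Measure.real, hvolT] at hnorm
    exact le_trans (le_abs_self _) (by rwa [Real.norm_eq_abs] at hnorm)
  constructor
  · have h2 : (∫ s₁ in Icc (0:ℝ) T, ∫ s₂ in Icc (0:ℝ) T, min 1 (|s₁ - s₂| ^ ρ)) ≤ B * T :=
      houter _ B (fun s _ => hFnn s) (fun s hs => hkey s hs)
    refine h2.trans ?_
    have hexp : T ^ m * T = T ^ max (4 * H - 2) 1 := by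
      rw [← Real.rpow_add_one hT0.ne' m]
      congr 1
      rw [hmdef, hρdef, ← max_add_add_right]
      congr 1 <;> ring
    calc B * T = 2 * (Real.log T + 1) * (T ^ m * T) := by rw [hBdef]; ring
      _ = 2 * (Real.log T + 1) * T ^ max (4 * H - 2) 1 := by rw [hexp]
      _ ≤ 4 * (Real.log T + 1) * T ^ max (4 * H - 2) 1 := by
          apply mul_le_mul_of_nonneg_right _ (Real.rpow_nonneg hT0.le _)
          linarith
  · have hGle : ∀ s₁ ∈ Icc (0:ℝ) T,
        (∫ s₂ in Icc (0:ℝ) T, ∫ s₃ in Icc (0:ℝ) T,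
          min 1 (|s₁ - s₂| ^ ρ) * min 1 (|s₂ - s₃| ^ ρ)) ≤ B * B := by
      intro s₁ hs₁
      have heq : ∀ s₂ : ℝ, (∫ s₃ in Icc (0:ℝ) T,
            min 1 (|s₁ - s₂| ^ ρ) * min 1 (|s₂ - s₃| ^ ρ))
          = min 1 (|s₁ - s₂| ^ ρ) * ∫ s₃ in Icc (0:ℝ) T, min 1 (|s₂ - s₃| ^ ρ) :=
        fun s₂ => MeasureTheory.integral_const_mul _ _
      simp only [heq]
      have step1 : (∫ s₂ in Icc (0:ℝ) T,
            min 1 (|s₁ - s₂| ^ ρ) * ∫ s₃ in Icc (0:ℝ) T, min 1 (|s₂ - s₃| ^ ρ))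
          ≤ ∫ s₂ in Icc (0:ℝ) T, min 1 (|s₁ - s₂| ^ ρ) * B := by
        apply integral_mono_of_nonneg
        · exact Filter.Eventually.of_forall fun s₂ => mul_nonneg (f_nonneg ρ _) (hFnn s₂)
        · exact (f_intOn ρ s₁ T).mul_const B
        · filter_upwards [ae_restrict_mem measurableSet_Icc] with s₂ hs₂
          exact mul_le_mul_of_nonneg_left (hkey s₂ hs₂) (f_nonneg ρ _)
      refine step1.trans ?_
      rw [MeasureTheory.integral_mul_const]
      exact mul_le_mul_of_nonneg_right (hkey s₁ hs₁) hB0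
    have h3 : (∫ s₁ in Icc (0:ℝ) T, ∫ s₂ in Icc (0:ℝ) T, ∫ s₃ in Icc (0:ℝ) T,
        min 1 (|s₁ - s₂| ^ ρ) * min 1 (|s₂ - s₃| ^ ρ)) ≤ B * B * T := by
      apply houter _ (B * B) _ hGle
      intro s₁ _
      apply setIntegral_nonneg measurableSet_Icc
      intro s₂ _
      apply setIntegral_nonneg measurableSet_Icc
      intro s₃ _
      exact mul_nonneg (f_nonneg ρ _) (f_nonneg ρ _)
    refine h3.trans ?_
    have h2m : 2 * m + 1 ≤ max (8 * H - 5) 1 := by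
      rcases le_or_gt (ρ + 1) 0 with h | h
      · rw [hmdef, max_eq_right h]
        simpa using le_max_right (8 * H - 5) 1
      · rw [hmdef, max_eq_left h.le]
        have heq2 : 2 * (ρ + 1) + 1 = 8 * H - 5 := by rw [hρdef]; ring
        rw [heq2]
        exact le_max_left _ _
    have hexp2 : T ^ m * T ^ m * T ≤ T ^ max (8 * H - 5) 1 := by
      rw [← Real.rpow_add hT0, ← Real.rpow_add_one hT0.ne']
      apply Real.rpow_le_rpow_of_exponent_le hT
      linarith [h2m]
    calc B * B * T = 4 * (Real.log T + 1) ^ 2 * (T ^ m * T ^ m * T) := by rw [hBdef]; ring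
      _ ≤ 4 * (Real.log T + 1) ^ 2 * T ^ max (8 * H - 5) 1 := by
          apply mul_le_mul_of_nonneg_left hexp2 (by positivity)
end

section
/- Euler scheme comparison with the discrete OU scheme: let b satisfy ⟨b(x)-b(y),x-y⟩ ≤ -κ|x-y|², |b(x)-b(y)| ≤ K|x-y| with κ, K > 0, let γ ∈ (0,1) be such that 0 < κγ - 2K²γ² < 1. For two continuous driving paths define the Euler iterates M_{(k+1)γ} = M_{kγ} + γ b(M_{kγ}) + Δ_k and the OU iterates M⁰_{(k+1)γ} = (1-γ) M⁰_{kγ} + Δ_k with the same increments Δ_k and same initial conditions, for two different noises yielding differences 𝓜_{kγ} = M^H_{kγ} - M^K_{kγ} and 𝓜⁰_{kγ} = M^{0,H}_{kγ} - M^{0,K}_{kγ} with 𝓜₀ = 𝓜⁰₀. Then there is a constant C (depending only on κ, K) such that for all N ≥ 1: (1/N) Σ_{k=0}^N |𝓜_{kγ}|² ≤ C (1/N) Σ_{k=0}^N |𝓜⁰_{kγ}|². -/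
open RealInnerProductSpace

lemma stmt18_arith (κ K γ c a b2 ip nsq D : ℝ) (hκ : 0 < κ) (hγ0 : 0 < γ) (hγ1 : γ < 1)
    (hpos : 0 < κ * γ - 2 * K ^ 2 * γ ^ 2)
    (hc : c = 2 * (K + 1) ^ 2 / κ + 2) (ha : 0 ≤ a) (hb : 0 ≤ b2)
    (hip : ip ≤ -κ * a ^ 2 + (K + 1) * (a * b2))
    (hnsq : nsq ≤ 2 * K ^ 2 * a ^ 2 + 2 * b2 ^ 2) :
    D + 2 * (γ * ip) + γ ^ 2 * nsq ≤ D - κ / 2 * γ * a ^ 2 + γ * c * b2 ^ 2 := by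
  have hκ0 : κ ≠ 0 := ne_of_gt hκ
  have hyoung : 2 * (K + 1) * (a * b2) ≤ κ / 2 * a ^ 2 + (c - 2) * b2 ^ 2 := by
    have hcm : κ * ((c - 2) * b2 ^ 2) = 2 * (K + 1) ^ 2 * b2 ^ 2 := by
      have e : c - 2 = 2 * (K + 1) ^ 2 / κ := by rw [hc]; ring
      rw [e, mul_comm, mul_right_comm, div_mul_cancel₀ _ hκ0]
    have hmul : 0 ≤ κ * (κ / 2 * a ^ 2 + (c - 2) * b2 ^ 2 - 2 * (K + 1) * (a * b2)) := by
      nlinarith [sq_nonneg (κ * a - 2 * (K + 1) * b2)]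
    nlinarith
  have h2K : 2 * K ^ 2 * γ ≤ κ := by nlinarith
  have hX : 2 * (-κ * a ^ 2 + (K + 1) * (a * b2)) + γ * (2 * K ^ 2 * a ^ 2 + 2 * b2 ^ 2)
      ≤ -(κ / 2) * a ^ 2 + c * b2 ^ 2 := by
    have e1 : γ * (2 * K ^ 2 * a ^ 2) ≤ κ * a ^ 2 := by nlinarith [sq_nonneg a]
    have e2 : γ * (2 * b2 ^ 2) ≤ 2 * b2 ^ 2 := by nlinarith [sq_nonneg b2]
    nlinarith
  have t1 : γ * ip ≤ γ * (-κ * a ^ 2 + (K + 1) * (a * b2)) :=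
    mul_le_mul_of_nonneg_left hip (le_of_lt hγ0)
  have t2 : γ ^ 2 * nsq ≤ γ ^ 2 * (2 * K ^ 2 * a ^ 2 + 2 * b2 ^ 2) :=
    mul_le_mul_of_nonneg_left hnsq (sq_nonneg γ)
  have hγX := mul_le_mul_of_nonneg_left hX (le_of_lt hγ0)
  nlinarith

theorem stmt18 (d : ℕ) (κ K : ℝ) (hκ : 0 < κ) (hK : 0 < K) :
    ∃ C : ℝ, ∀ b : EuclideanSpace ℝ (Fin d) → EuclideanSpace ℝ (Fin d),
      (∀ x y, ⟪b x - b y, x - y⟫ ≤ -κ * ‖x - y‖ ^ 2) →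
      (∀ x y, ‖b x - b y‖ ≤ K * ‖x - y‖) →
      ∀ γ : ℝ, γ ∈ Set.Ioo (0:ℝ) 1 →
        0 < κ * γ - 2 * K ^ 2 * γ ^ 2 → κ * γ - 2 * K ^ 2 * γ ^ 2 < 1 →
      ∀ Δ Δ' MH MK M0H M0K : ℕ → EuclideanSpace ℝ (Fin d),
        (∀ k, MH (k+1) = MH k + γ • b (MH k) + Δ k) →
        (∀ k, MK (k+1) = MK k + γ • b (MK k) + Δ' k) →
        (∀ k, M0H (k+1) = (1-γ) • M0H k + Δ k) →
        (∀ k, M0K (k+1) = (1-γ) • M0K k + Δ' k) →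
        MH 0 = M0H 0 → MK 0 = M0K 0 →
        ∀ N : ℕ, 1 ≤ N →
          (1 / (N:ℝ)) * ∑ k ∈ Finset.range (N+1), ‖MH k - MK k‖ ^ 2 ≤
            C * ((1 / (N:ℝ)) * ∑ k ∈ Finset.range (N+1), ‖M0H k - M0K k‖ ^ 2) := by
  set c : ℝ := 2 * (K + 1) ^ 2 / κ + 2 with hc
  refine ⟨2 / κ * c, ?_⟩
  intro b hdiss hlip γ hγ hpos hlt Δ Δ' MH MK M0H M0K hMH hMK h0H h0K hi1 hi2 N hN
  obtain ⟨hγ0, hγ1⟩ := hγ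
  -- one-step estimate
  have key : ∀ k : ℕ,
      ‖(MH (k+1) - MK (k+1)) - (M0H (k+1) - M0K (k+1))‖ ^ 2 ≤
        ‖(MH k - MK k) - (M0H k - M0K k)‖ ^ 2 - κ / 2 * γ * ‖MH k - MK k‖ ^ 2
          + γ * c * ‖M0H k - M0K k‖ ^ 2 := by
    intro k
    set A : EuclideanSpace ℝ (Fin d) := MH k - MK k with hA
    set B : EuclideanSpace ℝ (Fin d) := M0H k - M0K k with hB
    set β : EuclideanSpace ℝ (Fin d) := b (MH k) - b (MK k) with hβ
    have hrec : (MH (k+1) - MK (k+1)) - (M0H (k+1) - M0K (k+1))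
        = (A - B) + γ • (β + B) := by
      rw [hMH, hMK, h0H, h0K, hA, hB, hβ]
      module
    have h1 : ⟪β, A⟫ ≤ -κ * ‖A‖ ^ 2 := hdiss _ _
    have h2 : ‖β‖ ≤ K * ‖A‖ := hlip _ _
    have ha := norm_nonneg A
    have hb := norm_nonneg B
    have hip : ⟪β + B, A - B⟫ ≤ -κ * ‖A‖ ^ 2 + (K + 1) * (‖A‖ * ‖B‖) := by
      have e : ⟪β + B, A - B⟫ = ⟪β, A⟫ - ⟪β, B⟫ + ⟪B, A⟫ - ‖B‖ ^ 2 := by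
        simp only [inner_add_left, inner_sub_right, real_inner_self_eq_norm_sq]
        ring
      have c1 : -⟪β, B⟫ ≤ ‖β‖ * ‖B‖ := by
        have h := abs_real_inner_le_norm β B
        have h' := neg_abs_le ⟪β, B⟫
        linarith
      have c2 : ⟪B, A⟫ ≤ ‖B‖ * ‖A‖ := real_inner_le_norm B A
      have c3 : ‖β‖ * ‖B‖ ≤ K * ‖A‖ * ‖B‖ :=
        mul_le_mul_of_nonneg_right h2 hb
      nlinarith [sq_nonneg ‖B‖]
    have hnsq : ‖β + B‖ ^ 2 ≤ 2 * K ^ 2 * ‖A‖ ^ 2 + 2 * ‖B‖ ^ 2 := by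
      have hn : ‖β + B‖ ≤ K * ‖A‖ + ‖B‖ := (norm_add_le β B).trans (by linarith)
      have h0 : (0:ℝ) ≤ ‖β + B‖ := norm_nonneg _
      nlinarith [sq_nonneg (K * ‖A‖ - ‖B‖)]
    have hexp : ‖(A - B) + γ • (β + B)‖ ^ 2
        = ‖A - B‖ ^ 2 + 2 * (γ * ⟪β + B, A - B⟫) + γ ^ 2 * ‖β + B‖ ^ 2 := by
      rw [norm_add_sq_real, real_inner_smul_right, norm_smul, real_inner_comm,
        mul_pow, Real.norm_eq_abs, sq_abs]
    rw [hrec, hexp]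
    exact stmt18_arith κ K γ c ‖A‖ ‖B‖ ⟪β + B, A - B⟫ (‖β + B‖ ^ 2) (‖A - B‖ ^ 2)
      hκ hγ0 hγ1 hpos hc ha hb hip hnsq
  -- telescoping / induction
  have main : ∀ n : ℕ,
      ‖(MH n - MK n) - (M0H n - M0K n)‖ ^ 2
        + κ / 2 * γ * ∑ k ∈ Finset.range n, ‖MH k - MK k‖ ^ 2
        ≤ γ * c * ∑ k ∈ Finset.range n, ‖M0H k - M0K k‖ ^ 2 := by
    intro n
    induction n with
    | zero => simp [hi1, hi2]
    | succ n ih =>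
      rw [Finset.sum_range_succ, Finset.sum_range_succ]
      have hk := key n
      linarith
  have hS := main (N + 1)
  have hD := sq_nonneg ‖(MH (N+1) - MK (N+1)) - (M0H (N+1) - M0K (N+1))‖
  set S : ℝ := ∑ k ∈ Finset.range (N+1), ‖MH k - MK k‖ ^ 2 with hSdef
  set S0 : ℝ := ∑ k ∈ Finset.range (N+1), ‖M0H k - M0K k‖ ^ 2 with hS0def
  have hγS : γ * (κ / 2 * S) ≤ γ * (c * S0) := by
    have heq : κ / 2 * γ * S = γ * (κ / 2 * S) := by ring
    have heq2 : γ * c * S0 = γ * (c * S0) := by ring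
    linarith [heq ▸ heq2 ▸ hS]
  have hstep : κ / 2 * S ≤ c * S0 := le_of_mul_le_mul_left hγS hγ0
  have hfin : S ≤ 2 / κ * c * S0 := by
    have h2κ : (0:ℝ) < 2 / κ := by positivity
    have hm := mul_le_mul_of_nonneg_left hstep (le_of_lt h2κ)
    have heq : 2 / κ * (κ / 2 * S) = S := by field_simp
    rw [heq] at hm
    linarith
  calc (1 / (N:ℝ)) * S ≤ (1 / (N:ℝ)) * (2 / κ * c * S0) := by
        apply mul_le_mul_of_nonneg_left hfin
        positivity
    _ = 2 / κ * c * ((1 / (N:ℝ)) * S0) := by ring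
end
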